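/- Let A be an associative unital ring (not necessarily commutative), and let n ≥ 1, ℓ ≥ 0 be integers with n ≥ ℓ + 1. Suppose x₁, …, x_n ∈ A pairwise commute and τ₁, …, τ_{n−1} ∈ A satisfy: τ_k² = 0; τ_k τ_{k+1} τ_k = τ_{k+1} τ_k τ_{k+1}; τ_k τ_l = τ_l τ_k for |k − l| ≥ 2; τ_k x_j = x_j τ_k for j ∉ {k, k+1}; τ_k x_k = x_{k+1} τ_k + 1; and τ_k x_{k+1} = x_k τ_k − 1. If x₁^ℓ = 0, then 1 = 0 in A, i.e. A is the zero ring. -/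

import Mathlib

namespace Stmt4Aux

variable {A : Type*} [Ring A]

def Hh (x : ℕ → A) : ℕ → ℕ → A
  | _, 0 => 1
  | 0, _+1 => 0
  | k+1, m+1 => Hh x k (m+1) + Hh x (k+1) m * x (k+1)
  termination_by k m => (k, m)

def Gg (x : ℕ → A) (k : ℕ) : ℕ → A
  | 0 => 1
  | m+1 => Hh x (k-1) (m+1) + Gg x k m * x (k+1)

@[simp] lemma Hh_zero (x : ℕ → A) (k : ℕ) : Hh x k 0 = 1 := by
  cases k <;> simp [Hh]

lemma Hh_one_pow (x : ℕ → A) (m : ℕ) : Hh x 1 m = x 1 ^ m := by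
  induction m with
  | zero => simp
  | succ m ih => rw [show (1:ℕ) = 0 + 1 from rfl, Hh, ih]; simp [pow_succ, Hh]

lemma Hh_succ (x : ℕ → A) (k m : ℕ) :
    Hh x (k+1) (m+1) = Hh x k (m+1) + Hh x (k+1) m * x (k+1) := by
  rw [Hh]

variable {n : ℕ} {x τ : ℕ → A}

lemma comm_Hh
    (hτxfar : ∀ k j, 1 ≤ k → k ≤ n - 1 → 1 ≤ j → j ≤ n → j ≠ k → j ≠ k + 1 →
      τ k * x j = x j * τ k)
    {k : ℕ} (hk1 : 1 ≤ k) (hkn : k ≤ n - 1) (hn : 1 ≤ n) :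
    ∀ j, j + 1 ≤ k → ∀ r, Hh x j r * τ k = τ k * Hh x j r := by
  intro j
  induction j with
  | zero => intro _ r; cases r <;> simp [Hh]
  | succ j ih =>
    intro hj r
    induction r with
    | zero => simp
    | succ r ihr =>
      have hx : τ k * x (j+1) = x (j+1) * τ k :=
        hτxfar k (j+1) hk1 hkn (by omega) (by omega) (by omega) (by omega)
      rw [Hh_succ, add_mul, mul_add, ih (by omega) (r+1)]
      congr 1
      calc Hh x (j+1) r * x (j+1) * τ k
          = Hh x (j+1) r * (τ k * x (j+1)) := by rw [mul_assoc, hx]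
        _ = τ k * (Hh x (j+1) r * x (j+1)) := by
            rw [← mul_assoc, ihr, mul_assoc]

lemma MI
    (hτxfar : ∀ k j, 1 ≤ k → k ≤ n - 1 → 1 ≤ j → j ≤ n → j ≠ k → j ≠ k + 1 →
      τ k * x j = x j * τ k)
    (hτx' : ∀ k, 1 ≤ k → k ≤ n - 1 → τ k * x (k + 1) = x k * τ k - 1)
    {k : ℕ} (hk1 : 1 ≤ k) (hkn : k ≤ n - 1) (hn : 1 ≤ n) :
    ∀ m, Hh x k (m+1) * τ k = τ k * Gg x k (m+1) + Hh x (k+1) m := by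
  obtain ⟨k', rfl⟩ : ∃ k', k = k' + 1 := ⟨k - 1, by omega⟩
  set k := k' + 1 with hk
  have hxτ : x k * τ k = τ k * x (k+1) + 1 := by
    rw [hτx' k hk1 hkn, sub_add_cancel]
  have hcH : ∀ r, Hh x k' r * τ k = τ k * Hh x k' r := by
    intro r; exact comm_Hh hτxfar hk1 hkn hn k' (by omega) r
  intro m
  induction m with
  | zero =>
    show Hh x k 1 * τ k = τ k * Gg x k 1 + Hh x (k+1) 0
    rw [show Hh x k 1 = Hh x k' 1 + Hh x k 0 * x k from Hh_succ x k' 0]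
    rw [show Gg x k 1 = Hh x (k-1) 1 + Gg x k 0 * x (k+1) from rfl]
    simp only [Hh_zero, one_mul, hk]
    rw [add_mul, hcH 1]
    rw [show k'+1-1 = k' from rfl, show Gg x (k'+1) 0 = 1 from rfl, one_mul, mul_add]
    rw [show x (k'+1) * τ (k'+1) = τ k * x (k+1) + 1 from hxτ]
    abel
  | succ m ihm =>
    show Hh x k (m+2) * τ k = τ k * Gg x k (m+2) + Hh x (k+1) (m+1)
    rw [show Hh x k (m+2) = Hh x k' (m+2) + Hh x k (m+1) * x k from Hh_succ x k' (m+1)]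
    rw [add_mul, hcH (m+2)]
    have h2 : Hh x k (m+1) * x k * τ k
        = (τ k * Gg x k (m+1) + Hh x (k+1) m) * x (k+1) + Hh x k (m+1) := by
      rw [mul_assoc, hxτ, mul_add, mul_one, ← mul_assoc, ihm]
    rw [h2]
    rw [show Gg x k (m+2) = Hh x (k-1) (m+2) + Gg x k (m+1) * x (k+1) from rfl,
        show Hh x (k+1) (m+1) = Hh x k (m+1) + Hh x (k+1) m * x (k+1) from Hh_succ x k m]
    simp only [show k-1 = k' from rfl, mul_add, add_mul, mul_assoc]
    abel

end Stmt4Aux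

namespace T2
variable {A : Type*} [Ring A] {n ℓ : ℕ} {x τ : ℕ → A}
open Stmt4Aux Finset

lemma chain
    (hτxfar : ∀ k j, 1 ≤ k → k ≤ n - 1 → 1 ≤ j → j ≤ n → j ≠ k → j ≠ k + 1 →
      τ k * x j = x j * τ k)
    (hτx' : ∀ k, 1 ≤ k → k ≤ n - 1 → τ k * x (k + 1) = x k * τ k - 1)
    (hn : 1 ≤ n) (hnℓ : ℓ + 1 ≤ n) (hx : x 1 ^ ℓ = 0) :
    ∃ b : ℕ → A, (1:A) = ∑ j ∈ Finset.Icc 1 ℓ, τ j * b j := by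
  have main : ∀ k, 1 ≤ k → k ≤ ℓ + 1 →
      ∃ b : ℕ → A, Hh x k (ℓ+1-k) = ∑ j ∈ Finset.Icc 1 (k-1), τ j * b j := by
    intro k hk1
    induction k, hk1 using Nat.le_induction with
    | base =>
      intro _
      refine ⟨fun _ => 0, ?_⟩
      simp [Hh_one_pow, hx]
    | succ k hk ih =>
      intro hk1
      obtain ⟨b, hb⟩ := ih (by omega)
      have hmi := MI (n := n) hτxfar hτx' (k := k) hk (by omega) hn (ℓ - k)
      have he : ℓ + 1 - k = ℓ - k + 1 := by omega
      have he2 : ℓ + 1 - (k + 1) = ℓ - k := by omega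
      set b' : ℕ → A := fun j => if j = k then -(Gg x k (ℓ-k+1)) else b j * τ k with hb'
      have hb'k : b' k = -(Gg x k (ℓ-k+1)) := by simp [hb']
      have hb'j : ∀ j, j ≠ k → b' j = b j * τ k := by
        intro j hj; simp [hb', hj]
      refine ⟨b', ?_⟩
      have hstep : Hh x (k+1) (ℓ-k)
          = Hh x k (ℓ+1-k) * τ k - τ k * Gg x k (ℓ-k+1) := by
        rw [he, hmi]; abel
      rw [he2, hstep, hb, Finset.sum_mul]
      obtain ⟨k', rfl⟩ : ∃ k', k = k' + 1 := ⟨k - 1, by omega⟩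
      rw [show k' + 1 + 1 - 1 = k' + 1 from rfl,
        Finset.sum_Icc_succ_top (by omega : (1:ℕ) ≤ k' + 1), hb'k,
        show k' + 1 - 1 = k' from rfl]
      have : ∀ j ∈ Finset.Icc 1 k', τ j * b' j = τ j * b j * τ (k'+1) := by
        intro j hj
        simp only [Finset.mem_Icc] at hj
        rw [hb'j j (by omega), mul_assoc]
      rw [Finset.sum_congr rfl this, mul_neg, sub_eq_add_neg]
  obtain ⟨b, hb⟩ := main (ℓ+1) (by omega) le_rfl
  refine ⟨b, ?_⟩
  simpa using hb

end T2

namespace Stmt4Words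

variable {A : Type*} [Ring A]

/-- Product of `τ`'s along a word. -/
def P (τ : ℕ → A) (w : List ℕ) : A := (w.map τ).prod

@[simp] lemma P_nil (τ : ℕ → A) : P τ [] = 1 := rfl

@[simp] lemma P_cons (τ : ℕ → A) (j : ℕ) (w : List ℕ) :
    P τ (j :: w) = τ j * P τ w := by simp [P]

lemma P_append (τ : ℕ → A) (w v : List ℕ) :
    P τ (w ++ v) = P τ w * P τ v := by simp [P]

lemma comm_P (τ : ℕ → A) (j : ℕ) (w : List ℕ)
    (h : ∀ i ∈ w, τ j * τ i = τ i * τ j) :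
    τ j * P τ w = P τ w * τ j := by
  induction w with
  | nil => simp
  | cons a w ih =>
    have ha := h a (List.mem_cons_self (a := a) (l := w))
    have ihw := ih (fun i hi => h i (List.mem_cons_of_mem a hi))
    rw [P_cons, ← mul_assoc, ha, mul_assoc, ihw, ← mul_assoc]

variable {n : ℕ} {τ : ℕ → A}

lemma NF
    (hτsq : ∀ k, 1 ≤ k → k ≤ n - 1 → τ k ^ 2 = 0)
    (hbraid : ∀ k, 1 ≤ k → k + 1 ≤ n - 1 →
      τ k * τ (k + 1) * τ k = τ (k + 1) * τ k * τ (k + 1))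
    (hdist : ∀ k l, 1 ≤ k → k ≤ n - 1 → 1 ≤ l → l ≤ n - 1 →
      (k + 2 ≤ l ∨ l + 2 ≤ k) → τ k * τ l = τ l * τ k)
    {L : ℕ} (hL1 : 1 ≤ L) (hLn : L ≤ n - 1) :
    ∀ w : List ℕ, (∀ j ∈ w, 1 ≤ j ∧ j ≤ L) →
    P τ w = 0 ∨ ∃ k v, 1 ≤ k ∧ k ≤ L + 1 ∧ (∀ j ∈ v, 1 ≤ j ∧ j ≤ L - 1) ∧
      P τ w = P τ (List.range' k (L+1-k)) * P τ v ∧ (L+1-k) + v.length = w.length := by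
  intro w
  induction w with
  | nil =>
    intro _
    right
    exact ⟨L+1, [], by omega, le_rfl, by simp, by simp, by simp⟩
  | cons j rest ih =>
    intro hw
    obtain ⟨hj1, hjL⟩ : 1 ≤ j ∧ j ≤ L := hw j (List.mem_cons_self (a := j) (l := rest))
    rcases ih (fun i hi => hw i (List.mem_cons_of_mem j hi)) with h0 | ⟨k, v, hk1, hkL, hv, hPv, hlen⟩
    · left; rw [P_cons, h0, mul_zero]
    · -- commutation helper
      have hcomm2 : ∀ a b : ℕ, 1 ≤ a → a ≤ L → 1 ≤ b → b ≤ L → a + 2 ≤ b →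
          τ a * τ b = τ b * τ a := by
        intro a b ha1 haL hb1 hbL hab
        exact hdist a b ha1 (by omega) hb1 (by omega) (Or.inl hab)
      have hmem_run : ∀ {s m : ℕ} {i : ℕ}, i ∈ List.range' s m → s ≤ i ∧ i < s + m := by
        intro s m i hi
        have := List.mem_range'_1.mp hi
        omega
      have hcase : j + 2 ≤ k ∨ j + 1 = k ∨ j = k ∨ j = k + 1 ∨ k + 2 ≤ j := by omega
      rcases hcase with hc | hc | hc | hc | hc
      · -- j far below k : commute τ_j past the run
        right
        refine ⟨k, j :: v, hk1, hkL, ?_, ?_, by simp only [List.length_cons]; omega⟩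
        · intro i hi
          rcases List.mem_cons.mp hi with rfl | hi
          · omega
          · exact ⟨(hv i hi).1, (hv i hi).2⟩
        · have hcm : τ j * P τ (List.range' k (L+1-k)) = P τ (List.range' k (L+1-k)) * τ j := by
            apply comm_P
            intro i hi
            have := hmem_run hi
            exact hcomm2 j i hj1 hjL (by omega) (by omega) (by omega)
          rw [P_cons, hPv, ← mul_assoc, hcm, P_cons, mul_assoc]
      · -- j = k - 1 : extend the run
        right
        refine ⟨j, v, hj1, by omega, hv, ?_, by simp only [List.length_cons]; omega⟩
        have hrun : List.range' j (L+1-j) = j :: List.range' k (L+1-k) := by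
          have h1 : L + 1 - j = (L + 1 - k) + 1 := by omega
          rw [h1, List.range'_succ (s := j) (n := L+1-k) (step := 1)]
          rw [hc]
        rw [P_cons, hPv, hrun, P_cons, mul_assoc]
      · -- j = k : square zero
        left
        subst hc
        have hrun : List.range' j (L+1-j) = j :: List.range' (j+1) (L-j) := by
          have h1 : L + 1 - j = (L - j) + 1 := by omega
          rw [h1, List.range'_succ (s := j) (n := L-j) (step := 1)]
        have hsq : τ j * τ j = 0 := by
          have := hτsq j hj1 (by omega)
          rwa [pow_two] at this
        rw [P_cons, hPv, hrun, P_cons, ← mul_assoc, ← mul_assoc, hsq]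
        simp
      · -- j = k + 1 : braid at the head of the run
        right
        subst hc
        -- here k + 1 ≤ L so k ≤ L - 1
        have hkL' : k + 1 ≤ L := hjL
        refine ⟨k, k :: v, hk1, hkL, ?_, ?_, by simp only [List.length_cons]; omega⟩
        · intro i hi
          rcases List.mem_cons.mp hi with rfl | hi
          · omega
          · exact ⟨(hv i hi).1, (hv i hi).2⟩
        · have hrun : List.range' k (L+1-k) = k :: (k+1) :: List.range' (k+2) (L-k-1) := by
            have h1 : L + 1 - k = (L - k - 1) + 1 + 1 := by omega
            rw [h1, List.range'_succ (s := k) (n := (L-k-1)+1) (step := 1), List.range'_succ (s := k+1) (n := L-k-1) (step := 1)]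
          have hbr : τ (k+1) * τ k * τ (k+1) = τ k * τ (k+1) * τ k :=
            (hbraid k hk1 (by omega)).symm
          have hcm : τ k * P τ (List.range' (k+2) (L-k-1)) =
              P τ (List.range' (k+2) (L-k-1)) * τ k := by
            apply comm_P
            intro i hi
            have := hmem_run hi
            exact hcomm2 k i hk1 (by omega) (by omega) (by omega) (by omega)
          rw [P_cons, hPv, hrun]
          rw [P_cons, P_cons, P_cons]
          set R := P τ (List.range' (k+2) (L-k-1)) with hR
          set V := P τ v with hV
          simp only [← mul_assoc]
          rw [hbr, mul_assoc (τ k * τ (k+1)) (τ k) R, hcm]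
          simp only [← mul_assoc]
      · -- k + 2 ≤ j ≤ L : braid in the middle of the run
        right
        refine ⟨k, (j-1) :: v, hk1, hkL, ?_, ?_, by simp only [List.length_cons]; omega⟩
        · intro i hi
          rcases List.mem_cons.mp hi with rfl | hi
          · omega
          · exact ⟨(hv i hi).1, (hv i hi).2⟩
        · -- split the run
          have hsplit : List.range' k (L+1-k)
              = List.range' k (j-1-k) ++ (j-1) :: j :: List.range' (j+1) (L-j) := by
            have h2 : List.range' (j-1) (L+2-j) = (j-1) :: j :: List.range' (j+1) (L-j) := by
              have e1 : L + 2 - j = (L + 1 - j) + 1 := by omega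
              rw [e1, List.range'_succ (s := j-1) (n := L+1-j) (step := 1)]
              have e2 : L + 1 - j = (L - j) + 1 := by omega
              rw [show j - 1 + 1 = j by omega, e2, List.range'_succ (s := j) (n := L-j) (step := 1)]
            rw [← h2]
            have := List.range'_append (s := k) (m := j-1-k) (n := L+2-j) (step := 1)
            rw [one_mul] at this
            rw [show k + (j-1-k) = j - 1 by omega] at this
            rw [show j - 1 - k + (L + 2 - j) = L + 1 - k by omega] at this
            exact this.symm
          have hcm1 : τ j * P τ (List.range' k (j-1-k)) =
              P τ (List.range' k (j-1-k)) * τ j := by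
            apply comm_P
            intro i hi
            have := hmem_run hi
            exact (hcomm2 i j (by omega) (by omega) hj1 hjL (by omega)).symm
          have hcm2 : τ (j-1) * P τ (List.range' (j+1) (L-j)) =
              P τ (List.range' (j+1) (L-j)) * τ (j-1) := by
            apply comm_P
            intro i hi
            have := hmem_run hi
            exact (hcomm2 (j-1) i (by omega) (by omega) (by omega) (by omega) (by omega))
          have hbrr := hbraid (j-1) (by omega) (by omega)
          rw [show j - 1 + 1 = j by omega] at hbrr
          -- hbrr : τ (j-1) * τ j * τ (j-1) = τ j * τ (j-1) * τ j
          have key : τ j * (τ (j-1) * τ j) = τ (j-1) * (τ j * τ (j-1)) := by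
            rw [← mul_assoc, ← mul_assoc]
            exact hbrr.symm
          rw [P_cons, hPv, hsplit, P_append, P_cons, P_cons, P_cons]
          set Pa := P τ (List.range' k (j-1-k)) with hPa
          set Pb := P τ (List.range' (j+1) (L-j)) with hPb
          set V := P τ v with hV
          simp only [← mul_assoc]
          rw [hcm1, mul_assoc Pa (τ j) (τ (j-1)), mul_assoc Pa (τ j * τ (j-1)) (τ j),
            mul_assoc (τ j) (τ (j-1)) (τ j), key]
          simp only [← mul_assoc]
          rw [mul_assoc (Pa * τ (j-1) * τ j) (τ (j-1)) Pb, hcm2]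
          simp only [← mul_assoc]

end Stmt4Words

namespace Stmt4Words

variable {A : Type*} [Ring A] {n : ℕ} {τ : ℕ → A}

lemma LWV
    (hτsq : ∀ k, 1 ≤ k → k ≤ n - 1 → τ k ^ 2 = 0)
    (hbraid : ∀ k, 1 ≤ k → k + 1 ≤ n - 1 →
      τ k * τ (k + 1) * τ k = τ (k + 1) * τ k * τ (k + 1))
    (hdist : ∀ k l, 1 ≤ k → k ≤ n - 1 → 1 ≤ l → l ≤ n - 1 →
      (k + 2 ≤ l ∨ l + 2 ≤ k) → τ k * τ l = τ l * τ k) :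
    ∀ L, L ≤ n - 1 → ∀ w : List ℕ, (∀ j ∈ w, 1 ≤ j ∧ j ≤ L) →
      L * (L + 1) < 2 * w.length → P τ w = 0 := by
  intro L
  induction L with
  | zero =>
    intro _ w hw hlen
    cases w with
    | nil => simp at hlen
    | cons a w => have := hw a (List.mem_cons_self (a := a) (l := w)); omega
  | succ L ihL =>
    intro hLn w hw hlen
    rcases NF hτsq hbraid hdist (L := L+1) (by omega) hLn w hw with h0 | ⟨k, v, hk1, hkL, hv, hPv, hl⟩
    · exact h0
    · have hvlen : L * (L + 1) < 2 * v.length := by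
        have he : (L+1) * (L+1+1) = L * (L+1) + 2 * (L+1) := by ring
        omega
      have hv0 : P τ v = 0 := by
        apply ihL (by omega) v _ hvlen
        intro i hi
        have := hv i hi
        omega
      rw [hPv, hv0, mul_zero]

end Stmt4Words


namespace Stmt4Words

variable {A : Type*} [Ring A]

/-- generating set: elements `u * (word product) * c` with word of length `m`. -/
def genset (τ : ℕ → A) (ℓ m : ℕ) : Set A :=
  {a | ∃ u c w, (∀ j ∈ w, 1 ≤ j ∧ j ≤ ℓ) ∧ List.length w = m ∧ a = u * P τ w * c}

end Stmt4Words


open Stmt4Aux Stmt4Words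


/-- The fact `R^λ(mi) = 0` for a real index `i` and `m ≥ λ(h_i) + 1`, used in
Lemma 3.4(i) of the paper: a ring carrying the defining relations of the
nilHecke algebra on `n` strands (the quiver Hecke algebra `R(ni)` for a real
index `i`) in which moreover `x 1 ^ ℓ = 0` with `n ≥ ℓ + 1` must be the zero
ring. -/
theorem stmt4 (A : Type*) [Ring A] (n ℓ : ℕ) (hn : 1 ≤ n) (hnℓ : ℓ + 1 ≤ n)
    (x τ : ℕ → A)
    (hcomm : ∀ j k, 1 ≤ j → j ≤ n → 1 ≤ k → k ≤ n → x j * x k = x k * x j)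
    (hτsq : ∀ k, 1 ≤ k → k ≤ n - 1 → τ k ^ 2 = 0)
    (hbraid : ∀ k, 1 ≤ k → k + 1 ≤ n - 1 →
      τ k * τ (k + 1) * τ k = τ (k + 1) * τ k * τ (k + 1))
    (hdist : ∀ k l, 1 ≤ k → k ≤ n - 1 → 1 ≤ l → l ≤ n - 1 →
      (k + 2 ≤ l ∨ l + 2 ≤ k) → τ k * τ l = τ l * τ k)
    (hτxfar : ∀ k j, 1 ≤ k → k ≤ n - 1 → 1 ≤ j → j ≤ n → j ≠ k → j ≠ k + 1 →
      τ k * x j = x j * τ k)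
    (hτx : ∀ k, 1 ≤ k → k ≤ n - 1 → τ k * x k = x (k + 1) * τ k + 1)
    (hτx' : ∀ k, 1 ≤ k → k ≤ n - 1 → τ k * x (k + 1) = x k * τ k - 1)
    (hx : x 1 ^ ℓ = 0) :
    (1 : A) = 0 := by
  obtain ⟨b, hb⟩ := T2.chain hτxfar hτx' hn hnℓ hx
  have key : ∀ m, (1:A) ∈ AddSubgroup.closure (genset τ ℓ m) := by
    intro m
    induction m with
    | zero =>
      exact AddSubgroup.subset_closure ⟨1, 1, [], by simp, by simp, by simp⟩
    | succ m ih =>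
      have hle : AddSubgroup.closure (genset τ ℓ m)
          ≤ AddSubgroup.closure (genset τ ℓ (m+1)) := by
        rw [AddSubgroup.closure_le]
        rintro a ⟨u, c, w, hw, hwl, rfl⟩
        have hdecomp : u * P τ w * c
            = ∑ j ∈ Finset.Icc 1 ℓ, u * P τ (w ++ [j]) * (b j * c) := by
          calc u * P τ w * c
              = u * P τ w * ((∑ j ∈ Finset.Icc 1 ℓ, τ j * b j) * c) := by
                rw [← hb, one_mul]
            _ = ∑ j ∈ Finset.Icc 1 ℓ, u * P τ (w ++ [j]) * (b j * c) := by
                rw [Finset.sum_mul, Finset.mul_sum]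
                refine Finset.sum_congr rfl (fun j hj => ?_)
                rw [P_append]
                simp only [P_cons, P_nil, mul_one]
                simp only [mul_assoc]
        rw [hdecomp]
        refine AddSubgroup.sum_mem _ (fun j hj => AddSubgroup.subset_closure ?_)
        refine ⟨u, b j * c, w ++ [j], ?_, by simp [hwl], rfl⟩
        intro i hi
        rcases List.mem_append.mp hi with hi | hi
        · exact hw i hi
        · simp only [List.mem_singleton] at hi
          subst hi
          have := Finset.mem_Icc.mp hj
          omega
      exact hle ih
  have hM := key (ℓ * (ℓ+1) + 1)
  have hsub : genset τ ℓ (ℓ * (ℓ+1) + 1) ⊆ {0} := by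
    rintro a ⟨u, c, w, hw, hwl, rfl⟩
    have h0 : P τ w = 0 := by
      apply LWV hτsq hbraid hdist ℓ (by omega) w hw
      omega
    simp [h0]
  have hbot : (1:A) ∈ (⊥ : AddSubgroup A) :=
    (AddSubgroup.closure_le ⊥).2 (by simpa using hsub) hM
  simpa using hbot
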